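/- arXiv:1309.4837 — 3 statements merged into one kernel-verified Lean document; each statement's English description precedes it below -/
import Mathlib

section
/- If G is an edge-maximal k-degenerate graph on n > k vertices (i.e., adding any missing edge to G destroys k-degeneracy), then the minimum degree of G equals k. -/
open Matrix Finset BigOperators

/-- A graph is `k`-degenerate if every nonempty (induced) subgraph has a vertex
of degree at most `k` within it. -/
def SimpleGraph.Degenerate {V : Type*} (k : ℕ) (G : SimpleGraph V) : Prop :=
  ∀ s : Finset V, s.Nonempty → ∃ v ∈ s, {u ∈ (s : Set V) | G.Adj v u}.ncard ≤ k

/-- `SGraph n k`: the join of a complete graph on the first `k` vertices with an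
independent set on the remaining `n - k` vertices (the graph `S_{n,k}`). -/
def SGraph (n k : ℕ) : SimpleGraph (Fin n) where
  Adj u v := u ≠ v ∧ ((u : ℕ) < k ∨ (v : ℕ) < k)
  symm := ⟨by intro u v h; exact ⟨h.1.symm, h.2.symm⟩⟩
  loopless := ⟨by intro u h; exact h.1 rfl⟩

instance (n k : ℕ) : DecidableRel (SGraph n k).Adj := fun u v => by
  unfold SGraph; infer_instance

/-- The signless Laplacian `Q = D + A` as a real matrix. -/
noncomputable def signlessLaplacian {n : ℕ} (G : SimpleGraph (Fin n)) :
    Matrix (Fin n) (Fin n) ℝ :=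
  letI : DecidableRel G.Adj := Classical.decRel _
  Matrix.diagonal (fun v => (G.degree v : ℝ)) + G.adjMatrix ℝ

theorem signlessLaplacian_isHermitian {n : ℕ} (G : SimpleGraph (Fin n)) :
    (signlessLaplacian G).IsHermitian := by
  letI : DecidableRel G.Adj := Classical.decRel _
  unfold signlessLaplacian
  refine (Matrix.isHermitian_diagonal _).add ?_
  rw [Matrix.IsHermitian, Matrix.conjTranspose_eq_transpose_of_trivial]
  exact SimpleGraph.isSymm_adjMatrix G

theorem adjMatrix_isHermitian {n : ℕ} (G : SimpleGraph (Fin n)) [DecidableRel G.Adj] :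
    (G.adjMatrix ℝ).IsHermitian := by
  rw [Matrix.IsHermitian, Matrix.conjTranspose_eq_transpose_of_trivial]
  exact SimpleGraph.isSymm_adjMatrix G

/-- The largest adjacency eigenvalue `μ(G)`. -/
noncomputable def muIndex {n : ℕ} (G : SimpleGraph (Fin n)) : ℝ :=
  letI : DecidableRel G.Adj := Classical.decRel _
  ⨆ i, (adjMatrix_isHermitian G).eigenvalues i

/-- The largest signless Laplacian eigenvalue `q(G)` (the `Q`-index). -/
noncomputable def qIndex {n : ℕ} (G : SimpleGraph (Fin n)) : ℝ :=
  ⨆ i, (signlessLaplacian_isHermitian G).eigenvalues i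

theorem stmt2 (n k : ℕ) (hnk : k < n) (G : SimpleGraph (Fin n)) [DecidableRel G.Adj]
    (hG : G.Degenerate k)
    (hmax : ∀ H : SimpleGraph (Fin n), G < H → ¬ H.Degenerate k) :
    G.minDegree = k := by
  have hn : 0 < n := lt_of_le_of_lt (Nat.zero_le k) hnk
  haveI : Nonempty (Fin n) := ⟨⟨0, hn⟩⟩
  -- upper bound: some vertex has degree ≤ k
  have hupper : ∃ v, G.degree v ≤ k := by
    obtain ⟨v, _, hv⟩ := hG Finset.univ Finset.univ_nonempty
    refine ⟨v, ?_⟩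
    have hset : {u ∈ ((Finset.univ : Finset (Fin n)) : Set (Fin n)) | G.Adj v u}
        = G.neighborSet v := by
      ext x
      rw [Set.mem_sep_iff, SimpleGraph.mem_neighborSet, Finset.coe_univ]
      exact and_iff_right (Set.mem_univ x)
    rw [hset] at hv
    rwa [Set.ncard_eq_toFinset_card', ← SimpleGraph.neighborFinset_def,
      ← SimpleGraph.degree] at hv
  -- lower bound: every vertex has degree ≥ k
  have hlower : ∀ v, k ≤ G.degree v := by
    intro v
    by_contra hdeg
    push_neg at hdeg
    -- find a non-neighbor u ≠ v
    have hcard : (insert v (G.neighborFinset v)).card < n := by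
      calc (insert v (G.neighborFinset v)).card ≤ G.degree v + 1 := Finset.card_insert_le v (G.neighborFinset v)
        _ ≤ k := hdeg
        _ < n := hnk
    obtain ⟨u, hu⟩ : ∃ u, u ∉ insert v (G.neighborFinset v) := by
      by_contra h
      push_neg at h
      have : (Finset.univ : Finset (Fin n)) ⊆ insert v (G.neighborFinset v) :=
        fun x _ => h x
      have h2 := Finset.card_le_card this
      rw [Finset.card_univ, Fintype.card_fin] at h2
      omega
    have huv : u ≠ v := fun h => hu (by simp [h])
    have hnadj : ¬ G.Adj v u := fun h => hu (by simp [h])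
    -- build H = G + edge vu
    set H : SimpleGraph (Fin n) :=
      { Adj := fun a b => G.Adj a b ∨ (a = v ∧ b = u) ∨ (a = u ∧ b = v)
        symm := ⟨by intro a b h; tauto⟩
        loopless := ⟨by
          intro a h
          rcases h with h | ⟨h1, h2⟩ | ⟨h1, h2⟩
          · exact G.loopless.irrefl a h
          · exact huv (h2.symm.trans h1)
          · exact huv (h1.symm.trans h2)⟩ } with hHdef
    have hle : G ≤ H := fun a b h => Or.inl h
    have hlt : G < H := by
      refine lt_of_le_of_ne hle (fun h => ?_)
      have : H.Adj v u := Or.inr (Or.inl ⟨rfl, rfl⟩)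
      rw [← h] at this
      exact hnadj this
    refine hmax H hlt ?_
    intro s hs
    by_cases hvs : v ∈ s
    · refine ⟨v, hvs, ?_⟩
      have hsub : {w ∈ (s : Set (Fin n)) | H.Adj v w} ⊆ insert u (G.neighborSet v) := by
        intro x hx
        rcases hx.2 with h | ⟨h1, h2⟩ | ⟨h1, h2⟩
        · exact Set.mem_insert_of_mem _ h
        · exact h2 ▸ Set.mem_insert _ _
        · exact absurd h1.symm huv
      calc {w ∈ (s : Set (Fin n)) | H.Adj v w}.ncard
          ≤ (insert u (G.neighborSet v)).ncard :=
            Set.ncard_le_ncard hsub (Set.toFinite _)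
        _ ≤ (G.neighborSet v).ncard + 1 := Set.ncard_insert_le _ _
        _ = G.degree v + 1 := by
            rw [Set.ncard_eq_toFinset_card', ← SimpleGraph.neighborFinset_def,
              ← SimpleGraph.degree]
        _ ≤ k := hdeg
    · obtain ⟨w, hw, hwcard⟩ := hG s hs
      refine ⟨w, hw, ?_⟩
      have heq : {x ∈ (s : Set (Fin n)) | H.Adj w x} = {x ∈ (s : Set (Fin n)) | G.Adj w x} := by
        ext x
        simp only [Set.mem_setOf_eq]
        constructor
        · rintro ⟨hxs, h | ⟨h1, h2⟩ | ⟨h1, h2⟩⟩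
          · exact ⟨hxs, h⟩
          · exact absurd (h1 ▸ hw) hvs
          · exact absurd (h2 ▸ hxs) hvs
        · rintro ⟨hxs, h⟩; exact ⟨hxs, Or.inl h⟩
      rw [heq]
      exact hwcard
  -- conclude
  obtain ⟨v₀, hv₀⟩ := hupper
  have h1 : G.minDegree ≤ k := le_trans (G.minDegree_le_degree v₀) hv₀
  obtain ⟨w, hw⟩ := G.exists_minimal_degree_vertex
  have h2 : k ≤ G.minDegree := hw ▸ hlower w
  omega
end

section
/- If G is a graph of order n with m edges, maximum degree Δ and minimum degree δ, and if 2m ≥ Δ² + Δ + (n − 1 − Δ)δ, then (1/2)·(Δ + 2δ − 1 + sqrt((Δ + 2δ − 1)² + 16m − 8(n − 1 + Δ)δ)) ≥ 2Δ. -/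
open Matrix Finset BigOperators

theorem stmt10 (n m Δ δ : ℝ) (h1 : δ ≤ 2 * m / n) (h2 : 2 * m / n ≤ Δ)
    (h3 : Δ ≤ n - 1)
    (hrad : 0 ≤ (Δ + 2 * δ - 1) ^ 2 + 16 * m - 8 * (n - 1 + Δ) * δ)
    (hm : 2 * m ≥ Δ ^ 2 + Δ + (n - 1 - Δ) * δ) :
    2 * Δ ≤ (1 / 2) * (Δ + 2 * δ - 1 +
      Real.sqrt ((Δ + 2 * δ - 1) ^ 2 + 16 * m - 8 * (n - 1 + Δ) * δ)) := by
  have key : (3*Δ - 2*δ + 1)^2 ≤ (Δ + 2 * δ - 1) ^ 2 + 16 * m - 8 * (n - 1 + Δ) * δ := by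
    nlinarith
  have h := Real.sqrt_le_sqrt key
  rw [Real.sqrt_sq_eq_abs] at h
  have h2 := le_abs_self (3*Δ - 2*δ + 1)
  linarith
end

section
/- Let G be a graph of order n with m edges, maximum degree Δ and minimum degree δ, and let q = q(G) be the largest signless Laplacian eigenvalue. Then q² − (Δ + 2δ − 1)q − 4m + 2(n − 1 + Δ)δ ≤ 0. -/
open Matrix Finset BigOperators

open scoped RealInnerProductSpace in
/-- Any symmetric entrywise-nonnegative real matrix has a nonnegative eigenvector
for its largest eigenvalue. -/
theorem perron_aux {n : ℕ} (hn : 0 < n) (Q : Matrix (Fin n) (Fin n) ℝ) (hQ : Q.IsHermitian)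
    (hent : ∀ i j, 0 ≤ Q i j) :
    ∃ y : Fin n → ℝ, (∀ i, 0 ≤ y i) ∧ (∃ i, 0 < y i) ∧
      Q *ᵥ y = (⨆ i, hQ.eigenvalues i) • y := by
  haveI : Nonempty (Fin n) := Fin.pos_iff_nonempty.mp hn
  set q : ℝ := ⨆ i, hQ.eigenvalues i with hqdef
  obtain ⟨i0, -, hi0⟩ := Finset.exists_max_image Finset.univ hQ.eigenvalues
    ⟨_, Finset.mem_univ (Classical.arbitrary (Fin n))⟩
  have hle : ∀ i, hQ.eigenvalues i ≤ q := fun i =>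
    le_ciSup (Set.Finite.bddAbove (Set.finite_range _)) i
  have hq0 : q = hQ.eigenvalues i0 :=
    le_antisymm (ciSup_le fun i => hi0 i (Finset.mem_univ i)) (hle i0)
  set b := hQ.eigenvectorBasis with hbdef
  set lam := hQ.eigenvalues with hlamdef
  set v : Fin n → Fin n → ℝ := fun i => ⇑(b i) with hvdef
  have hQv : ∀ i, Q *ᵥ v i = lam i • v i := fun i => hQ.mulVec_eigenvectorBasis i
  set x : Fin n → ℝ := v i0 with hxdef
  have hQx : Q *ᵥ x = q • x := by rw [hq0]; exact hQv i0
  set y : Fin n → ℝ := fun i => |x i| with hydef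
  have hy0 : ∀ i, 0 ≤ y i := fun i => abs_nonneg _
  set yE : EuclideanSpace ℝ (Fin n) := (WithLp.equiv 2 (Fin n → ℝ)).symm y with hyEdef
  have hyE : ∀ j, yE j = y j := fun j =>
    congrFun ((WithLp.equiv 2 (Fin n → ℝ)).apply_symm_apply y) j
  set c : Fin n → ℝ := fun i => b.repr yE i with hcdef
  have hci : ∀ i, c i = ∑ j, v i j * y j := by
    intro i
    show b.repr yE i = _
    rw [OrthonormalBasis.repr_apply_apply]
    rw [PiLp.inner_apply]
    refine Finset.sum_congr rfl fun j _ => ?_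
    rw [hyE j]
    simp only [RCLike.inner_apply, starRingEnd_apply, star_trivial]
    exact mul_comm _ _
  have hyj : ∀ j, y j = ∑ i, c i * v i j := by
    intro j
    have h1 : yE = ∑ i, c i • b i := (b.sum_repr yE).symm
    have e0 : y j = yE j := (hyE j).symm
    have e1 : yE j = ⟪EuclideanSpace.single j (1:ℝ), yE⟫ := by
      rw [EuclideanSpace.inner_single_left]; simp
    have e2 : ⟪EuclideanSpace.single j (1:ℝ), yE⟫ = ∑ i, c i * v i j := by
      rw [h1, inner_sum]
      refine Finset.sum_congr rfl fun i _ => ?_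
      rw [real_inner_smul_right, EuclideanSpace.inner_single_left]
      simp only [RingHom.map_one, one_mul]
      rfl
    rw [e0, e1, e2]
  have hmv : ∀ (z : Fin n → ℝ) (j : Fin n), (Q *ᵥ z) j = ∑ k, Q j k * z k := fun z j => rfl
  have hzj : ∀ j, (Q *ᵥ y) j = ∑ i, (lam i * c i) * v i j := by
    intro j
    rw [hmv y j]
    calc ∑ k, Q j k * y k = ∑ k, Q j k * ∑ i, c i * v i k :=
          Finset.sum_congr rfl fun k _ => by rw [← hyj k]
      _ = ∑ k, ∑ i, c i * (Q j k * v i k) := by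
          refine Finset.sum_congr rfl fun k _ => ?_
          rw [Finset.mul_sum]; exact Finset.sum_congr rfl fun i _ => by ring
      _ = ∑ i, ∑ k, c i * (Q j k * v i k) := Finset.sum_comm
      _ = ∑ i, c i * ((Q *ᵥ (v i)) j) := by
          refine Finset.sum_congr rfl fun i _ => ?_
          rw [hmv (v i) j, Finset.mul_sum]
      _ = ∑ i, (lam i * c i) * v i j := by
          refine Finset.sum_congr rfl fun i _ => ?_
          rw [hQv i]; simp only [Pi.smul_apply, smul_eq_mul]; ring
  have hyy : ∑ j, y j * y j = ∑ i, c i * c i := by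
    calc ∑ j, y j * y j = ∑ j, (∑ i, c i * v i j) * y j :=
          Finset.sum_congr rfl fun j _ => by rw [← hyj j]
      _ = ∑ j, ∑ i, c i * (v i j * y j) := by
          refine Finset.sum_congr rfl fun j _ => ?_
          rw [Finset.sum_mul]; exact Finset.sum_congr rfl fun i _ => by ring
      _ = ∑ i, ∑ j, c i * (v i j * y j) := Finset.sum_comm
      _ = ∑ i, c i * c i := by
          refine Finset.sum_congr rfl fun i _ => ?_
          rw [← Finset.mul_sum, ← hci i]
  have hyQy : ∑ j, y j * (Q *ᵥ y) j = ∑ i, lam i * (c i * c i) := by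
    calc ∑ j, y j * (Q *ᵥ y) j = ∑ j, y j * ∑ i, (lam i * c i) * v i j :=
          Finset.sum_congr rfl fun j _ => by rw [hzj j]
      _ = ∑ j, ∑ i, (lam i * c i) * (v i j * y j) := by
          refine Finset.sum_congr rfl fun j _ => ?_
          rw [Finset.mul_sum]; exact Finset.sum_congr rfl fun i _ => by ring
      _ = ∑ i, ∑ j, (lam i * c i) * (v i j * y j) := Finset.sum_comm
      _ = ∑ i, lam i * (c i * c i) := by
          refine Finset.sum_congr rfl fun i _ => ?_
          rw [← Finset.mul_sum, ← hci i]; ring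
  have hexpand : ∀ z : Fin n → ℝ, ∑ j, z j * (Q *ᵥ z) j = ∑ j, ∑ k, Q j k * (z j * z k) := by
    intro z
    refine Finset.sum_congr rfl fun j _ => ?_
    rw [hmv z j, Finset.mul_sum]
    exact Finset.sum_congr rfl fun k _ => by ring
  have hxy : ∀ j k, x j * x k ≤ y j * y k := by
    intro j k
    calc x j * x k ≤ |x j * x k| := le_abs_self _
      _ = y j * y k := abs_mul _ _
  have hxx : ∑ j, x j * x j = ∑ j, y j * y j :=
    Finset.sum_congr rfl fun j _ => (abs_mul_abs_self (x j)).symm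
  have hlow : q * (∑ j, y j * y j) ≤ ∑ j, y j * (Q *ᵥ y) j := by
    have e1 : ∑ j, x j * (Q *ᵥ x) j = q * ∑ j, x j * x j := by
      rw [hQx, Finset.mul_sum]
      exact Finset.sum_congr rfl fun j _ => by
        simp only [Pi.smul_apply, smul_eq_mul]; ring
    have e2 : ∑ j, x j * (Q *ᵥ x) j ≤ ∑ j, y j * (Q *ᵥ y) j := by
      rw [hexpand x, hexpand y]
      refine Finset.sum_le_sum fun j _ => Finset.sum_le_sum fun k _ => ?_
      exact mul_le_mul_of_nonneg_left (hxy j k) (hent j k)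
    calc q * (∑ j, y j * y j) = ∑ j, x j * (Q *ᵥ x) j := by rw [e1, hxx]
      _ ≤ ∑ j, y j * (Q *ᵥ y) j := e2
  have hpt : ∀ i, lam i * (c i * c i) ≤ q * (c i * c i) := fun i =>
    mul_le_mul_of_nonneg_right (hle i) (mul_self_nonneg _)
  have hterm : ∀ i, lam i * c i = q * c i := by
    intro i
    rcases eq_or_lt_of_le (hpt i) with h | h
    · rcases mul_eq_zero.mp (by nlinarith [h] : (lam i - q) * c i * c i = 0) with h2 | h2
      · rcases mul_eq_zero.mp h2 with h3 | h3
        · nlinarith [h3]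
        · rw [h3]; ring
      · rw [h2]; ring
    · exfalso
      have hstrict : ∑ i, lam i * (c i * c i) < ∑ i, q * (c i * c i) :=
        Finset.sum_lt_sum (fun j _ => hpt j) ⟨i, Finset.mem_univ i, h⟩
      rw [← Finset.mul_sum, ← hyy, ← hyQy] at hstrict
      linarith [hlow]
  have heig : Q *ᵥ y = q • y := by
    funext j
    show (Q *ᵥ y) j = q * y j
    rw [hzj j]
    calc ∑ i, (lam i * c i) * v i j = ∑ i, (q * c i) * v i j :=
          Finset.sum_congr rfl fun i _ => by rw [hterm i]
      _ = q * ∑ i, c i * v i j := by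
          rw [Finset.mul_sum]; exact Finset.sum_congr rfl fun i _ => by ring
      _ = q * y j := by rw [← hyj j]
  have hpos : ∃ i, 0 < y i := by
    by_contra h
    push_neg at h
    have hx0 : ∀ i, x i = 0 := fun i =>
      abs_eq_zero.mp (le_antisymm (h i) (hy0 i))
    have : b i0 = 0 := by
      have h1 : v i0 = 0 := funext fun i => hx0 i
      have h2 : b i0 = (WithLp.equiv 2 (Fin n → ℝ)).symm (v i0) :=
        ((WithLp.equiv 2 (Fin n → ℝ)).symm_apply_apply (b i0)).symm
      rw [h2, h1]; rfl
    exact b.orthonormal.ne_zero i0 this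
  exact ⟨y, hy0, hpos, heig⟩

theorem sl_apply {n : ℕ} (G : SimpleGraph (Fin n)) [DecidableRel G.Adj] (i j : Fin n) :
    signlessLaplacian G i j =
      (if i = j then (G.degree i : ℝ) else 0) + (if G.Adj i j then 1 else 0) := by
  unfold signlessLaplacian
  rw [Matrix.add_apply, Matrix.diagonal_apply]
  congr 1
  · split
    · congr!
    · rfl
  · simp [SimpleGraph.adjMatrix_apply]

theorem sl_entry_nonneg {n : ℕ} (G : SimpleGraph (Fin n)) [DecidableRel G.Adj] (i j : Fin n) :
    0 ≤ signlessLaplacian G i j := by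
  rw [sl_apply]
  positivity

theorem sl_mulVec {n : ℕ} (G : SimpleGraph (Fin n)) [DecidableRel G.Adj] (z : Fin n → ℝ)
    (u : Fin n) :
    (signlessLaplacian G *ᵥ z) u = (G.degree u : ℝ) * z u + ∑ w ∈ G.neighborFinset u, z w := by
  have h0 : (signlessLaplacian G *ᵥ z) u = ∑ j, signlessLaplacian G u j * z j := rfl
  rw [h0]
  have h1 : ∀ j, signlessLaplacian G u j * z j =
      (if u = j then (G.degree u : ℝ) * z j else 0) + (if G.Adj u j then z j else 0) := by
    intro j
    rw [sl_apply, add_mul]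
    congr 1
    · split <;> simp
    · split <;> simp
  rw [Finset.sum_congr rfl fun j _ => h1 j, Finset.sum_add_distrib, Finset.sum_ite_eq]
  simp only [Finset.mem_univ, if_true]
  congr 1
  rw [SimpleGraph.neighborFinset_eq_filter, Finset.sum_filter]

theorem nbhd_swap {n : ℕ} (G : SimpleGraph (Fin n)) [DecidableRel G.Adj]
    (g : Fin n → Fin n → ℝ) :
    ∑ u, ∑ w ∈ G.neighborFinset u, g u w = ∑ w, ∑ u ∈ G.neighborFinset w, g u w := by
  simp only [SimpleGraph.neighborFinset_eq_filter, Finset.sum_filter]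
  rw [Finset.sum_comm]
  refine Finset.sum_congr rfl fun w _ => Finset.sum_congr rfl fun u _ => ?_
  by_cases h : G.Adj u w
  · rw [if_pos h, if_pos h.symm]
  · rw [if_neg h, if_neg (fun h' => h h'.symm)]

theorem nbhd_weight {n : ℕ} (G : SimpleGraph (Fin n)) [DecidableRel G.Adj]
    (f : Fin n → ℝ) :
    ∑ u, ∑ w ∈ G.neighborFinset u, f w = ∑ w, (G.degree w : ℝ) * f w := by
  rw [nbhd_swap]
  refine Finset.sum_congr rfl fun w _ => ?_
  rw [Finset.sum_const, nsmul_eq_mul, G.card_neighborFinset_eq_degree w]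

theorem neighbor_degree_sum_bound {n : ℕ} (G : SimpleGraph (Fin n)) [DecidableRel G.Adj]
    (w : Fin n) :
    ∑ u ∈ G.neighborFinset w, (G.degree u : ℝ) ≤
      2 * (G.edgeSet.ncard : ℝ) - (G.degree w : ℝ) -
        ((n : ℝ) - 1 - (G.degree w : ℝ)) * (G.minDegree : ℝ) := by
  have hm : (G.edgeSet.ncard : ℝ) = (G.edgeFinset.card : ℝ) := by
    congr 1
    exact Set.ncard_eq_toFinset_card' _
  have hsum : ∑ u, (G.degree u : ℝ) = 2 * (G.edgeSet.ncard : ℝ) := by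
    rw [hm]
    rw [show ((2:ℝ) * (G.edgeFinset.card:ℝ)) = ((2 * G.edgeFinset.card : ℕ) : ℝ) by push_cast; ring]
    rw [← G.sum_degrees_eq_twice_card_edges]
    push_cast; rfl
  set N := G.neighborFinset w with hN
  have hwN : w ∉ N := SimpleGraph.notMem_neighborFinset_self G w
  have hsub : insert w N ⊆ Finset.univ := Finset.subset_univ _
  set R := Finset.univ \ insert w N with hR
  have hsplit : ∑ u ∈ insert w N, (G.degree u : ℝ) + ∑ u ∈ R, (G.degree u : ℝ)
      = ∑ u, (G.degree u : ℝ) := by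
    rw [hR, Finset.sum_sdiff_eq_sub hsub]
    ring_nf
  have hins : ∑ u ∈ insert w N, (G.degree u : ℝ)
      = (G.degree w : ℝ) + ∑ u ∈ N, (G.degree u : ℝ) := Finset.sum_insert hwN
  have hcardR : (R.card : ℝ) = (n : ℝ) - 1 - (G.degree w : ℝ) := by
    rw [hR, Finset.card_sdiff_of_subset hsub]
    rw [Finset.card_insert_of_notMem hwN]
    have h1 : N.card = G.degree w := G.card_neighborFinset_eq_degree w
    have h2 : (Finset.univ : Finset (Fin n)).card = n := by simp
    have h3 : G.degree w + 1 ≤ n := by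
      have := G.degree_lt_card_verts w
      simpa [Fintype.card_fin] using this
    rw [h1, h2, Nat.cast_sub (by omega : G.degree w + 1 ≤ n)]
    push_cast
    ring
  have hRlow : ((n : ℝ) - 1 - (G.degree w : ℝ)) * (G.minDegree : ℝ)
      ≤ ∑ u ∈ R, (G.degree u : ℝ) := by
    rw [← hcardR]
    rw [← nsmul_eq_mul]
    exact Finset.card_nsmul_le_sum R _ _ (fun u _ => by
      exact_mod_cast G.minDegree_le_degree u)
  linarith [hsplit, hins, hRlow, hsum]

theorem stmt18 (n : ℕ) (G : SimpleGraph (Fin n)) [DecidableRel G.Adj] :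
    qIndex G ^ 2 - ((G.maxDegree : ℝ) + 2 * G.minDegree - 1) * qIndex G -
        4 * (G.edgeSet.ncard : ℝ) +
        2 * ((n : ℝ) - 1 + G.maxDegree) * G.minDegree ≤ 0 := by
  rcases Nat.eq_zero_or_pos n with hn | hn
  · subst hn
    have hq : qIndex G = 0 := Real.iSup_of_isEmpty _
    have hmax : G.maxDegree = 0 := by
      simp [SimpleGraph.maxDegree]
    have hmin : G.minDegree = 0 := by
      simp [SimpleGraph.minDegree]
    have hedge : G.edgeSet.ncard = 0 := by
      have : G.edgeSet = ∅ := Set.eq_empty_of_isEmpty _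
      rw [this, Set.ncard_empty]
    rw [hq, hmax, hmin, hedge]
    norm_num
  · obtain ⟨y, hy0, ⟨ip, hipos⟩, heigvec⟩ :=
      perron_aux hn (signlessLaplacian G) (signlessLaplacian_isHermitian G)
        (sl_entry_nonneg G)
    set q : ℝ := qIndex G with hqdef
    have hqq : (⨆ i, (signlessLaplacian_isHermitian G).eigenvalues i) = q := rfl
    rw [hqq] at heigvec
    set d : Fin n → ℝ := fun u => (G.degree u : ℝ) with hd
    set δ : ℝ := (G.minDegree : ℝ) with hδ
    set Δ : ℝ := (G.maxDegree : ℝ) with hΔ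
    set m : ℝ := (G.edgeSet.ncard : ℝ) with hm
    have heq : ∀ u, q * y u = d u * y u + ∑ w ∈ G.neighborFinset u, y w := by
      intro u
      have h1 := congrFun heigvec u
      rw [sl_mulVec] at h1
      simpa using h1.symm
    set Y : ℝ := ∑ u, y u with hY
    set Dy : ℝ := ∑ u, d u * y u with hDy
    set W : ℝ := ∑ u, d u * (d u * y u) with hW
    have hYpos : 0 < Y := Finset.sum_pos' (fun i _ => hy0 i) ⟨ip, Finset.mem_univ ip, hipos⟩
    have hI : q * Y = 2 * Dy := by
      have h1 : ∑ u, (q * y u) = ∑ u, (d u * y u + ∑ w ∈ G.neighborFinset u, y w) :=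
        Finset.sum_congr rfl fun u _ => heq u
      rw [Finset.sum_add_distrib, nbhd_weight, ← Finset.mul_sum] at h1
      rw [h1, ← hDy]
      ring
    have hII : q * Dy = W + ∑ w, (∑ u ∈ G.neighborFinset w, d u) * y w := by
      have h1 : ∑ u, d u * (q * y u)
          = ∑ u, (d u * (d u * y u) + d u * ∑ w ∈ G.neighborFinset u, y w) :=
        Finset.sum_congr rfl fun u _ => by rw [heq u]; ring
      have h2 : ∑ u, d u * (q * y u) = q * Dy := by
        rw [hDy, Finset.mul_sum]
        exact Finset.sum_congr rfl fun u _ => by ring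
      have h3 : ∑ u, d u * ∑ w ∈ G.neighborFinset u, y w
          = ∑ w, (∑ u ∈ G.neighborFinset w, d u) * y w := by
        have e1 : ∀ u : Fin n, d u * ∑ w ∈ G.neighborFinset u, y w
            = ∑ w ∈ G.neighborFinset u, d u * y w := fun u => Finset.mul_sum _ _ _
        rw [Finset.sum_congr rfl fun u _ => e1 u, nbhd_swap]
        exact Finset.sum_congr rfl fun w _ => (Finset.sum_mul _ _ _).symm
      rw [h1, Finset.sum_add_distrib, h3] at h2
      rw [← h2, ← hW]
    have hIII : ∑ w, (∑ u ∈ G.neighborFinset w, d u) * y w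
        ≤ 2*m*Y - Dy - ((n:ℝ)-1)*δ*Y + δ*Dy := by
      have h1 : ∑ w, (∑ u ∈ G.neighborFinset w, d u) * y w
          ≤ ∑ w, (2*m - d w - ((n:ℝ)-1-d w)*δ) * y w := by
        refine Finset.sum_le_sum fun w _ => ?_
        exact mul_le_mul_of_nonneg_right (neighbor_degree_sum_bound G w) (hy0 w)
      have h2 : ∑ w, (2*m - d w - ((n:ℝ)-1-d w)*δ) * y w
          = 2*m*Y - Dy - ((n:ℝ)-1)*δ*Y + δ*Dy := by
        have e1 : ∀ w : Fin n, (2*m - d w - ((n:ℝ)-1-d w)*δ) * y w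
            = 2*m*(y w) - d w * y w - ((n:ℝ)-1)*δ*(y w) + δ*(d w * y w) := fun w => by ring
        rw [Finset.sum_congr rfl fun w _ => e1 w]
        rw [Finset.sum_add_distrib, Finset.sum_sub_distrib, Finset.sum_sub_distrib,
          ← Finset.mul_sum, ← Finset.mul_sum, ← Finset.mul_sum]
      rw [h2] at h1
      exact h1
    have hIV : W ≤ (Δ+δ)*Dy - Δ*δ*Y := by
      have hpt : ∀ u : Fin n, d u * (d u * y u) ≤ ((Δ+δ)*(d u) - Δ*δ) * y u := by
        intro u
        have h1 : δ ≤ d u := by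
          show (G.minDegree : ℝ) ≤ (G.degree u : ℝ)
          exact_mod_cast G.minDegree_le_degree u
        have h2 : d u ≤ Δ := by
          show (G.degree u : ℝ) ≤ (G.maxDegree : ℝ)
          exact_mod_cast G.degree_le_maxDegree u
        nlinarith [mul_nonneg (mul_nonneg (sub_nonneg.mpr h2) (sub_nonneg.mpr h1)) (hy0 u)]
      have h1 : W ≤ ∑ u, ((Δ+δ)*(d u) - Δ*δ) * y u :=
        Finset.sum_le_sum fun u _ => hpt u
      have h2 : ∑ u, ((Δ+δ)*(d u) - Δ*δ) * y u = (Δ+δ)*Dy - Δ*δ*Y := by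
        have e1 : ∀ u : Fin n, ((Δ+δ)*(d u) - Δ*δ) * y u
            = (Δ+δ)*(d u * y u) - Δ*δ*(y u) := fun u => by ring
        rw [Finset.sum_congr rfl fun u _ => e1 u, Finset.sum_sub_distrib,
          ← Finset.mul_sum, ← Finset.mul_sum, ← hY, ← hDy]
      rw [h2] at h1
      exact h1
    -- combine
    have h5 : q * Dy ≤ (Δ + 2*δ - 1)*Dy - Δ*δ*Y + 2*m*Y - ((n:ℝ)-1)*δ*Y := by
      linarith [hII, hIII, hIV]
    have h6 : 2*(q*Dy) = q*(q*Y) := by rw [hI]; ring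
    have h7 : 2*((Δ + 2*δ - 1)*Dy) = (Δ + 2*δ - 1)*(q*Y) := by rw [hI]; ring
    have hkey : (q^2 - (Δ + 2*δ - 1)*q - 4*m + 2*((n:ℝ)-1+Δ)*δ) * Y ≤ 0 := by
      nlinarith [h5, h6, h7]
    nlinarith [hkey, hYpos]
end
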